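/- There exists a constant C > 0 such that for all 0 ≤ s < t and x ∈ [0,1], ∫₀^s ∫₀¹ (G_{t−r}(x,ξ) − G_{s−r}(x,ξ))² dξ dr ≤ C |t−s|^{1/2}, where G is the Neumann heat kernel on (0,1). -/

import Mathlib

open MeasureTheory Real Filter
open Topology

/-- eigenvalues -/
noncomputable def lam (n : ℕ) : ℝ := ((n : ℝ) + 1) ^ 2 * Real.pi ^ 2

lemma lam_pos (n : ℕ) : 0 < lam n := by
  have := Real.pi_pos
  unfold lam
  positivity

lemma one_le_lam (n : ℕ) : 1 ≤ lam n := by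
  have h : (1:ℝ) ≤ ((n:ℝ)+1)^2 := by nlinarith [Nat.cast_nonneg (α := ℝ) n]
  have h2 : (1:ℝ) ≤ Real.pi ^ 2 := by nlinarith [Real.pi_gt_three]
  unfold lam; nlinarith

lemma summable_exp_lam {τ : ℝ} (hτ : 0 < τ) :
    Summable (fun n : ℕ => Real.exp (-(lam n * τ))) := by
  have hq0 : 0 ≤ Real.exp (-(Real.pi ^ 2 * τ)) := (Real.exp_pos _).le
  have hq1 : Real.exp (-(Real.pi ^ 2 * τ)) < 1 := by
    rw [Real.exp_lt_one_iff, neg_lt_zero]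
    exact mul_pos (pow_pos Real.pi_pos 2) hτ
  have hgeo : Summable (fun n : ℕ => Real.exp (-(Real.pi ^ 2 * τ)) ^ (n + 1)) := by
    have := (summable_geometric_of_lt_one hq0 hq1).mul_left (Real.exp (-(Real.pi ^ 2 * τ)))
    simpa [← pow_succ'] using this
  refine Summable.of_nonneg_of_le (fun n => (Real.exp_pos _).le) (fun n => ?_) hgeo
  have : Real.exp (-(Real.pi ^ 2 * τ)) ^ (n + 1) = Real.exp (((n:ℝ)+1) * (-(Real.pi ^ 2 * τ))) := by
    rw [← Real.exp_nat_mul]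
    push_cast
    ring_nf
  rw [this, Real.exp_le_exp]
  have hn : ((n:ℝ)+1) ≤ ((n:ℝ)+1)^2 := by nlinarith [Nat.cast_nonneg (α := ℝ) n]
  have hpi : 0 < Real.pi ^ 2 := by positivity
  unfold lam
  nlinarith [mul_le_mul_of_nonneg_right hn (le_of_lt (mul_pos hpi hτ))]

lemma summable_of_abs_le_exp {c : ℕ → ℝ} {K τ : ℝ} (hτ : 0 < τ)
    (h : ∀ n, |c n| ≤ K * Real.exp (-(lam n * τ))) : Summable c := by
  rw [← summable_abs_iff]
  exact Summable.of_nonneg_of_le (fun n => abs_nonneg _) h ((summable_exp_lam hτ).mul_left K)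

lemma int_cos_int (k : ℤ) :
    (∫ ξ in (0:ℝ)..1, Real.cos ((k:ℝ) * Real.pi * ξ)) = if k = 0 then 1 else 0 := by
  by_cases hk : k = 0
  · simp [hk]
  · have hkpi : (k:ℝ) * Real.pi ≠ 0 := by
      have := Real.pi_ne_zero
      have : (k:ℝ) ≠ 0 := Int.cast_ne_zero.mpr hk
      positivity
    rw [if_neg hk]
    have := intervalIntegral.integral_comp_mul_left (a := (0:ℝ)) (b := 1) Real.cos hkpi
    simp only [mul_assoc] at this ⊢
    rw [this]
    simp [integral_cos, Real.sin_int_mul_pi]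

lemma cos_mul_cos_eq (a b : ℝ) :
    Real.cos a * Real.cos b = (Real.cos (a - b) + Real.cos (a + b)) / 2 := by
  rw [Real.cos_sub, Real.cos_add]; ring

lemma orth (n m : ℕ) :
    (∫ ξ in (0:ℝ)..1, Real.cos (((n:ℝ)+1) * Real.pi * ξ) * Real.cos (((m:ℝ)+1) * Real.pi * ξ))
      = if n = m then 1/2 else 0 := by
  have h1 : ∀ ξ : ℝ, Real.cos (((n:ℝ)+1) * Real.pi * ξ) * Real.cos (((m:ℝ)+1) * Real.pi * ξ)
      = (Real.cos ((((n:ℤ) - (m:ℤ) : ℤ):ℝ) * Real.pi * ξ)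
        + Real.cos ((((n:ℤ) + (m:ℤ) + 2 : ℤ):ℝ) * Real.pi * ξ)) / 2 := by
    intro ξ
    rw [cos_mul_cos_eq]
    push_cast
    ring_nf
  have hc : ∀ k : ℤ, Continuous fun ξ : ℝ => Real.cos ((k:ℝ) * Real.pi * ξ) := by
    intro k; fun_prop
  rw [intervalIntegral.integral_congr (g := fun ξ =>
      (Real.cos ((((n:ℤ) - (m:ℤ) : ℤ):ℝ) * Real.pi * ξ)
        + Real.cos ((((n:ℤ) + (m:ℤ) + 2 : ℤ):ℝ) * Real.pi * ξ)) / 2)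
      (fun ξ _ => h1 ξ)]
  rw [intervalIntegral.integral_div,
    intervalIntegral.integral_add ((hc _).intervalIntegrable _ _) ((hc _).intervalIntegrable _ _),
    int_cos_int, int_cos_int]
  have h2 : ((n:ℤ) + (m:ℤ) + 2 : ℤ) ≠ 0 := by omega
  rw [if_neg h2]
  by_cases h : n = m
  · rw [if_pos (by omega : ((n:ℤ) - (m:ℤ) : ℤ) = 0), if_pos h]; norm_num
  · rw [if_neg (by omega : ¬((n:ℤ) - (m:ℤ) : ℤ) = 0), if_neg h]; norm_num

/-- Neumann heat kernel on (0,1), via its eigenfunction expansion. -/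
noncomputable def NeumannHeatKernel (t x y : ℝ) : ℝ :=
  1 + ∑' n : ℕ, 2 * Real.exp (-((n + 1 : ℝ) ^ 2) * Real.pi ^ 2 * t) *
      Real.cos ((n + 1 : ℝ) * Real.pi * x) * Real.cos ((n + 1 : ℝ) * Real.pi * y)

noncomputable def coefA (x σ τ : ℝ) (n : ℕ) : ℝ :=
  2 * (Real.exp (-(lam n * τ)) - Real.exp (-(lam n * σ))) * Real.cos (((n:ℝ)+1) * Real.pi * x)

lemma exp_eq (n : ℕ) (τ : ℝ) :
    Real.exp (-(((n:ℝ) + 1) ^ 2) * Real.pi ^ 2 * τ) = Real.exp (-(lam n * τ)) := by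
  congr 1; unfold lam; ring

lemma abs_NHK_term_le (τ x y : ℝ) (n : ℕ) :
    |2 * Real.exp (-((n + 1 : ℝ) ^ 2) * Real.pi ^ 2 * τ) *
      Real.cos ((n + 1 : ℝ) * Real.pi * x) * Real.cos ((n + 1 : ℝ) * Real.pi * y)|
      ≤ 2 * Real.exp (-(lam n * τ)) := by
  rw [abs_mul, abs_mul, abs_mul, exp_eq]
  have h1 : |Real.cos (((n:ℝ) + 1) * Real.pi * x)| ≤ 1 := Real.abs_cos_le_one _
  have h2 : |Real.cos (((n:ℝ) + 1) * Real.pi * y)| ≤ 1 := Real.abs_cos_le_one _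
  have h3 : |Real.exp (-(lam n * τ))| = Real.exp (-(lam n * τ)) := abs_of_pos (Real.exp_pos _)
  rw [h3]
  have he : 0 ≤ Real.exp (-(lam n * τ)) := (Real.exp_pos _).le
  calc |(2:ℝ)| * Real.exp (-(lam n * τ)) * |Real.cos (((n:ℝ) + 1) * Real.pi * x)|
        * |Real.cos (((n:ℝ) + 1) * Real.pi * y)|
      ≤ |(2:ℝ)| * Real.exp (-(lam n * τ)) * 1 * 1 := by
        apply mul_le_mul_of_nonneg _ h2 (by positivity) (by norm_num)
        apply mul_le_mul_of_nonneg_left h1 (by positivity)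
    _ = 2 * Real.exp (-(lam n * τ)) := by norm_num

lemma summable_NHK (τ x y : ℝ) (hτ : 0 < τ) :
    Summable (fun n : ℕ => 2 * Real.exp (-((n + 1 : ℝ) ^ 2) * Real.pi ^ 2 * τ) *
      Real.cos ((n + 1 : ℝ) * Real.pi * x) * Real.cos ((n + 1 : ℝ) * Real.pi * y)) :=
  summable_of_abs_le_exp hτ (abs_NHK_term_le τ x y)

lemma NHK_sub_eq (x ξ : ℝ) {σ τ : ℝ} (hσ : 0 < σ) (hτ : 0 < τ) :
    NeumannHeatKernel τ x ξ - NeumannHeatKernel σ x ξ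
      = ∑' n : ℕ, coefA x σ τ n * Real.cos (((n:ℝ)+1) * Real.pi * ξ) := by
  unfold NeumannHeatKernel
  rw [add_sub_add_left_eq_sub, ← Summable.tsum_sub (summable_NHK τ x ξ hτ) (summable_NHK σ x ξ hσ)]
  congr 1
  funext n
  rw [exp_eq, exp_eq]
  unfold coefA
  ring

lemma one_sub_exp_le_min {u : ℝ} (hu : 0 ≤ u) : 1 - Real.exp (-u) ≤ min 1 u := by
  refine le_min (by linarith [Real.exp_pos (-u)]) ?_
  linarith [Real.add_one_le_exp (-u)]

lemma abs_coefA_le (x : ℝ) {σ τ : ℝ} (hσ : 0 < σ) (hστ : σ ≤ τ) (n : ℕ) :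
    |coefA x σ τ n| ≤ 2 * Real.exp (-(lam n * σ)) * min 1 (lam n * (τ - σ)) := by
  unfold coefA
  have hl := lam_pos n
  have hu : 0 ≤ lam n * (τ - σ) := mul_nonneg hl.le (sub_nonneg.2 hστ)
  have hd : Real.exp (-(lam n * τ)) - Real.exp (-(lam n * σ))
      = -(Real.exp (-(lam n * σ)) * (1 - Real.exp (-(lam n * (τ - σ))))) := by
    rw [show -(lam n * τ) = -(lam n * σ) + -(lam n * (τ - σ)) by ring, Real.exp_add]
    ring
  rw [abs_mul, abs_mul, hd, abs_neg, abs_mul]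
  have h1 : |Real.exp (-(lam n * σ))| = Real.exp (-(lam n * σ)) := abs_of_pos (Real.exp_pos _)
  have h2 : |1 - Real.exp (-(lam n * (τ - σ)))| = 1 - Real.exp (-(lam n * (τ - σ))) := by
    rw [abs_of_nonneg]
    simp only [sub_nonneg, Real.exp_le_one_iff, neg_nonpos]
    exact hu
  rw [h1, h2]
  have hmin := one_sub_exp_le_min hu
  have hcos : |Real.cos (((n:ℝ)+1) * Real.pi * x)| ≤ 1 := Real.abs_cos_le_one _
  have he : 0 ≤ Real.exp (-(lam n * σ)) := (Real.exp_pos _).le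
  have step1 : |(2:ℝ)| * (Real.exp (-(lam n * σ)) * (1 - Real.exp (-(lam n * (τ - σ)))))
      * |Real.cos (((n:ℝ)+1) * Real.pi * x)|
      ≤ |(2:ℝ)| * (Real.exp (-(lam n * σ)) * (1 - Real.exp (-(lam n * (τ - σ))))) * 1 := by
    apply mul_le_mul_of_nonneg_left hcos
    have h3 : 0 ≤ 1 - Real.exp (-(lam n * (τ - σ))) := by
      simp only [sub_nonneg, Real.exp_le_one_iff, neg_nonpos]; exact hu
    positivity
  calc |(2:ℝ)| * (Real.exp (-(lam n * σ)) * (1 - Real.exp (-(lam n * (τ - σ)))))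
        * |Real.cos (((n:ℝ)+1) * Real.pi * x)|
      ≤ |(2:ℝ)| * (Real.exp (-(lam n * σ)) * (1 - Real.exp (-(lam n * (τ - σ))))) * 1 := step1
    _ = 2 * (Real.exp (-(lam n * σ)) * (1 - Real.exp (-(lam n * (τ - σ))))) := by norm_num
    _ ≤ 2 * (Real.exp (-(lam n * σ)) * min 1 (lam n * (τ - σ))) := by
        apply mul_le_mul_of_nonneg_left _ (by norm_num)
        exact mul_le_mul_of_nonneg_left hmin he
    _ = 2 * Real.exp (-(lam n * σ)) * min 1 (lam n * (τ - σ)) := by ring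

lemma partial_sq_integral (a : ℕ → ℝ) (N : ℕ) :
    (∫ ξ in (0:ℝ)..1, (∑ n ∈ Finset.range N, a n * Real.cos (((n:ℝ)+1) * Real.pi * ξ)) ^ 2)
      = ∑ n ∈ Finset.range N, (a n) ^ 2 / 2 := by
  have hcont : ∀ n : ℕ, Continuous (fun ξ : ℝ => Real.cos (((n:ℝ)+1) * Real.pi * ξ)) := by
    intro n; fun_prop
  have hrw : ∀ ξ : ℝ, (∑ n ∈ Finset.range N, a n * Real.cos (((n:ℝ)+1) * Real.pi * ξ)) ^ 2
      = ∑ n ∈ Finset.range N, ∑ m ∈ Finset.range N,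
          (a n * a m) * (Real.cos (((n:ℝ)+1) * Real.pi * ξ) * Real.cos (((m:ℝ)+1) * Real.pi * ξ)) := by
    intro ξ
    rw [sq, Finset.sum_mul_sum]
    apply Finset.sum_congr rfl; intro n _
    apply Finset.sum_congr rfl; intro m _
    ring
  rw [intervalIntegral.integral_congr (g := fun ξ => ∑ n ∈ Finset.range N, ∑ m ∈ Finset.range N,
      (a n * a m) * (Real.cos (((n:ℝ)+1) * Real.pi * ξ) * Real.cos (((m:ℝ)+1) * Real.pi * ξ)))
      (fun ξ _ => hrw ξ)]
  rw [intervalIntegral.integral_finset_sum (fun n _ => by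
    apply Continuous.intervalIntegrable
    exact continuous_finset_sum _ (fun m _ => (continuous_const.mul ((hcont n).mul (hcont m)))))]
  have hinner : ∀ n ∈ Finset.range N,
      (∫ ξ in (0:ℝ)..1, ∑ m ∈ Finset.range N,
        (a n * a m) * (Real.cos (((n:ℝ)+1) * Real.pi * ξ) * Real.cos (((m:ℝ)+1) * Real.pi * ξ)))
      = (a n) ^ 2 / 2 := by
    intro n hn
    rw [intervalIntegral.integral_finset_sum (f := fun m ξ => (a n * a m) *
        (Real.cos (((n:ℝ)+1) * Real.pi * ξ) * Real.cos (((m:ℝ)+1) * Real.pi * ξ))) (fun m _ =>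
      (continuous_const.mul ((hcont n).mul (hcont m))).intervalIntegrable _ _)]
    have hterm : ∀ m ∈ Finset.range N,
        (∫ ξ in (0:ℝ)..1,
          (a n * a m) * (Real.cos (((n:ℝ)+1) * Real.pi * ξ) * Real.cos (((m:ℝ)+1) * Real.pi * ξ)))
        = if n = m then a n * a m / 2 else 0 := by
      intro m _
      rw [intervalIntegral.integral_const_mul, orth]
      split <;> simp <;> ring
    rw [Finset.sum_congr rfl hterm, Finset.sum_ite_eq (Finset.range N) n (fun m => a n * a m / 2),
      if_pos hn]
    ring
  rw [Finset.sum_congr rfl hinner]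

lemma inner_eq (x : ℝ) {σ τ : ℝ} (hσ : 0 < σ) (hστ : σ < τ) :
    (∫ ξ in (0:ℝ)..1, (NeumannHeatKernel τ x ξ - NeumannHeatKernel σ x ξ) ^ 2)
      = ∑' n : ℕ, (coefA x σ τ n) ^ 2 / 2 := by
  set a : ℕ → ℝ := coefA x σ τ with ha
  have hτ : 0 < τ := hσ.trans hστ
  have habs : ∀ n, |a n| ≤ 2 * Real.exp (-(lam n * σ)) := by
    intro n
    refine (abs_coefA_le x hσ hστ.le n).trans ?_
    have := min_le_left (1:ℝ) (lam n * (τ - σ))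
    nlinarith [Real.exp_pos (-(lam n * σ))]
  have hsum : Summable a := summable_of_abs_le_exp hσ habs
  have hsumabs : Summable (fun n => |a n|) := summable_abs_iff.mpr hsum
  have hsumsq : Summable (fun n => (a n) ^ 2 / 2) := by
    apply summable_of_abs_le_exp hσ (K := 2)
    intro n
    have h1 : |(a n) ^ 2 / 2| = (a n) ^ 2 / 2 := abs_of_nonneg (by positivity)
    rw [h1]
    have h2 : (a n) ^ 2 ≤ (2 * Real.exp (-(lam n * σ))) ^ 2 := by
      rw [← sq_abs]
      apply pow_le_pow_left₀ (abs_nonneg _) (habs n)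
    have h3 : Real.exp (-(lam n * σ)) ≤ 1 := by
      rw [Real.exp_le_one_iff]
      simp only [neg_nonpos]
      exact mul_nonneg (lam_pos n).le hσ.le
    nlinarith [Real.exp_pos (-(lam n * σ))]
  have hfsum : ∀ ξ : ℝ, Summable (fun n => a n * Real.cos (((n:ℝ)+1) * Real.pi * ξ)) := by
    intro ξ
    apply summable_of_abs_le_exp hσ (K := 2)
    intro n
    rw [abs_mul]
    calc |a n| * |Real.cos (((n:ℝ)+1) * Real.pi * ξ)| ≤ |a n| * 1 :=
          mul_le_mul_of_nonneg_left (Real.abs_cos_le_one _) (abs_nonneg _)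
      _ = |a n| := mul_one _
      _ ≤ 2 * Real.exp (-(lam n * σ)) := habs n
  set P : ℕ → ℝ → ℝ := fun N ξ => ∑ n ∈ Finset.range N, a n * Real.cos (((n:ℝ)+1) * Real.pi * ξ)
    with hP
  have hPcont : ∀ N, Continuous (P N) := by
    intro N
    apply continuous_finset_sum
    intro n _
    fun_prop
  -- dominated convergence
  have key2 : Tendsto (fun N => ∫ ξ in Set.Ioc (0:ℝ) 1, (P N ξ) ^ 2) atTop
      (𝓝 (∫ ξ in Set.Ioc (0:ℝ) 1,
        (NeumannHeatKernel τ x ξ - NeumannHeatKernel σ x ξ) ^ 2)) := by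
    apply MeasureTheory.tendsto_integral_of_dominated_convergence
      (bound := fun _ => (∑' n, |a n|) ^ 2)
    · intro N
      exact ((hPcont N).pow 2).aestronglyMeasurable
    · rw [MeasureTheory.integrable_const_iff]
      right
      exact ⟨by rw [Measure.restrict_apply_univ, Real.volume_Ioc]; exact ENNReal.ofReal_lt_top⟩
    · intro N
      apply Filter.Eventually.of_forall
      intro ξ
      have h1 : |P N ξ| ≤ ∑' n, |a n| := by
        calc |P N ξ| ≤ ∑ n ∈ Finset.range N, |a n * Real.cos (((n:ℝ)+1) * Real.pi * ξ)| :=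
              Finset.abs_sum_le_sum_abs _ _
          _ ≤ ∑ n ∈ Finset.range N, |a n| := by
              apply Finset.sum_le_sum
              intro n _
              rw [abs_mul]
              simpa using mul_le_mul_of_nonneg_left (Real.abs_cos_le_one _) (abs_nonneg (a n))
          _ ≤ ∑' n, |a n| := Summable.sum_le_tsum _ (fun n _ => abs_nonneg _) hsumabs
      have : ‖(P N ξ) ^ 2‖ = |P N ξ| ^ 2 := by
        rw [Real.norm_eq_abs, abs_pow, sq_abs, ← sq_abs]
      rw [this]
      exact pow_le_pow_left₀ (abs_nonneg _) h1 2
    · apply Filter.Eventually.of_forall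
      intro ξ
      rw [NHK_sub_eq x ξ hσ hτ]
      exact ((hfsum ξ).hasSum.tendsto_sum_nat).pow 2
  have key3 : Tendsto (fun N => ∑ n ∈ Finset.range N, (a n) ^ 2 / 2) atTop
      (𝓝 (∑' n, (a n) ^ 2 / 2)) := hsumsq.hasSum.tendsto_sum_nat
  have hrwN : ∀ N, (∫ ξ in Set.Ioc (0:ℝ) 1, (P N ξ) ^ 2) = ∑ n ∈ Finset.range N, (a n) ^ 2 / 2 := by
    intro N
    rw [← intervalIntegral.integral_of_le zero_le_one]
    exact partial_sq_integral a N
  simp only [hrwN] at key2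
  rw [intervalIntegral.integral_of_le zero_le_one]
  exact tendsto_nhds_unique key2 key3

lemma inner_le (x : ℝ) {σ τ : ℝ} (hσ : 0 < σ) (hστ : σ < τ) :
    (∫ ξ in (0:ℝ)..1, (NeumannHeatKernel τ x ξ - NeumannHeatKernel σ x ξ) ^ 2)
      ≤ ∑' n : ℕ, 2 * Real.exp (-(lam n * σ)) * (min 1 (lam n * (τ - σ))) ^ 2 := by
  rw [inner_eq x hσ hστ]
  have hexp1 : ∀ n : ℕ, Real.exp (-(lam n * σ)) ≤ 1 := by
    intro n
    rw [Real.exp_le_one_iff]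
    simp only [neg_nonpos]
    exact mul_nonneg (lam_pos n).le hσ.le
  have hmin0 : ∀ n : ℕ, 0 ≤ min 1 (lam n * (τ - σ)) := fun n =>
    le_min zero_le_one (mul_nonneg (lam_pos n).le (by linarith))
  have hpt : ∀ n : ℕ, (coefA x σ τ n) ^ 2 / 2
      ≤ 2 * Real.exp (-(lam n * σ)) * (min 1 (lam n * (τ - σ))) ^ 2 := by
    intro n
    have h1 : (coefA x σ τ n) ^ 2
        ≤ (2 * Real.exp (-(lam n * σ)) * min 1 (lam n * (τ - σ))) ^ 2 := by
      rw [← sq_abs]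
      exact pow_le_pow_left₀ (abs_nonneg _) (abs_coefA_le x hσ hστ.le n) 2
    have he := Real.exp_pos (-(lam n * σ))
    nlinarith [sq_nonneg (min 1 (lam n * (τ - σ))), hexp1 n, hmin0 n,
      mul_pos he he]
  apply Summable.tsum_le_tsum hpt
  · -- summable lhs
    apply summable_of_abs_le_exp hσ (K := 2)
    intro n
    rw [abs_of_nonneg (by positivity)]
    have h1 : (coefA x σ τ n) ^ 2 ≤ (2 * Real.exp (-(lam n * σ))) ^ 2 := by
      rw [← sq_abs]
      apply pow_le_pow_left₀ (abs_nonneg _) ((abs_coefA_le x hσ hστ.le n).trans ?_)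
      nlinarith [Real.exp_pos (-(lam n * σ)), min_le_left (1:ℝ) (lam n * (τ - σ))]
    nlinarith [Real.exp_pos (-(lam n * σ)), hexp1 n]
  · apply summable_of_abs_le_exp hσ (K := 2)
    intro n
    have he := Real.exp_pos (-(lam n * σ))
    rw [abs_of_nonneg (by positivity)]
    have : (min 1 (lam n * (τ - σ))) ^ 2 ≤ 1 := by
      nlinarith [hmin0 n, min_le_left (1:ℝ) (lam n * (τ - σ))]
    nlinarith

lemma integral_exp_sub {c : ℝ} (s : ℝ) (hc : 0 < c) :
    (∫ r in (0:ℝ)..s, Real.exp (-(c * (s - r)))) = (1 - Real.exp (-(c * s))) / c := by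
  have h : ∀ r ∈ Set.uIcc (0:ℝ) s,
      HasDerivAt (fun u => Real.exp (-(c * (s - u))) / c) (Real.exp (-(c * (s - r)))) r := by
    intro r _
    have h1 : HasDerivAt (fun u : ℝ => -(c * (s - u))) c r := by
      have heq : (fun u : ℝ => -(c * (s - u))) = fun u => c * u - c * s := by
        funext u; ring
      rw [heq]
      simpa using ((hasDerivAt_id r).const_mul c).sub_const (c * s)
    have h2 := (h1.exp).div_const c
    exact h2.congr_deriv (by field_simp)
  rw [intervalIntegral.integral_eq_sub_of_hasDerivAt h
    ((Real.continuous_exp.comp (by fun_prop)).intervalIntegrable _ _)]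
  simp only [sub_self, mul_zero, neg_zero, Real.exp_zero, sub_zero]
  ring

lemma one_div_lam_le (n : ℕ) {y : ℝ} (hy0 : 0 < y) (hy : y ≤ (n:ℝ) + 1) :
    1 / lam n ≤ 1 / (y * ((n:ℝ) + 1)) := by
  apply one_div_le_one_div_of_le (by positivity)
  have hpi : (1:ℝ) ≤ Real.pi ^ 2 := by nlinarith [Real.pi_gt_three]
  have hn : (0:ℝ) < (n:ℝ) + 1 := by positivity
  unfold lam
  nlinarith [mul_le_mul_of_nonneg_right hy hn.le]

lemma summable_min {δ : ℝ} (hδ : 0 ≤ δ) : Summable (fun n : ℕ => min δ (1 / lam n)) := by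
  apply summable_of_sum_range_le (c := 2)
    (fun n => le_min hδ (one_div_nonneg.mpr (lam_pos n).le))
  intro n
  set f : ℕ → ℝ := fun j => 1/((j:ℝ)+1) with hf
  have hterm : ∀ i : ℕ, min δ (1 / lam i) ≤ 2 * (f i - f (i+1)) := by
    intro i
    have h1 : (0:ℝ) < (i:ℝ) + 1 := by positivity
    have h2 : (0:ℝ) < (i:ℝ) + 2 := by positivity
    have h3 : f i - f (i+1) = 1/(((i:ℝ)+1) * ((i:ℝ)+2)) := by
      simp only [hf]
      push_cast
      rw [div_sub_div _ _ h1.ne' (by positivity : ((i:ℝ)+1+1) ≠ 0)]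
      rw [show (1:ℝ)*((i:ℝ)+1+1) - ((i:ℝ)+1)*1 = 1 by ring]
      rw [show ((i:ℝ)+1)*((i:ℝ)+1+1) = ((i:ℝ)+1)*((i:ℝ)+2) by ring]
    refine (min_le_right _ _).trans ((one_div_lam_le i h1 le_rfl).trans ?_)
    rw [h3, show (2:ℝ) * (1/((((i:ℝ)+1)) * (((i:ℝ)+2)))) = 2/((((i:ℝ)+1)) * (((i:ℝ)+2))) by
      ring]
    rw [div_le_div_iff₀ (by positivity) (by positivity)]
    nlinarith
  calc ∑ i ∈ Finset.range n, min δ (1 / lam i)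
      ≤ ∑ i ∈ Finset.range n, 2 * (f i - f (i+1)) := Finset.sum_le_sum (fun i _ => hterm i)
    _ = 2 * (f 0 - f n) := by rw [← Finset.mul_sum, Finset.sum_range_sub' f n]
    _ ≤ 2 := by
        have h1 : f 0 = 1 := by simp [hf]
        have h2 : 0 ≤ f n := by simp only [hf]; positivity
        rw [h1]; linarith

lemma tail_bound {δ : ℝ} (hδ : 0 ≤ δ) {N : ℕ} (hN : 1 ≤ N) :
    (∑' k : ℕ, min δ (1 / lam (k + N))) ≤ 1 / (N:ℝ) := by
  have hNR : (1:ℝ) ≤ (N:ℝ) := by exact_mod_cast hN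
  apply Summable.tsum_le_of_sum_range_le ((summable_nat_add_iff N).mpr (summable_min hδ))
  intro K
  have hterm : ∀ k : ℕ, min δ (1 / lam (k + N))
      ≤ (fun j : ℕ => 1/((j:ℝ)+(N:ℝ))) k - (fun j : ℕ => 1/((j:ℝ)+(N:ℝ))) (k+1) := by
    intro k
    have h1 : (0:ℝ) < (k:ℝ) + (N:ℝ) := by linarith [Nat.cast_nonneg (α := ℝ) k]
    have h2 : (0:ℝ) < (k:ℝ) + (N:ℝ) + 1 := by linarith
    refine (min_le_right _ _).trans ?_
    have h3 : (1:ℝ)/((k:ℝ)+(N:ℝ)) - 1/((k:ℝ)+1+(N:ℝ))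
        = 1/(((k:ℝ)+(N:ℝ)) * (((k:ℝ)+(N:ℝ))+1)) := by
      rw [show (k:ℝ)+1+(N:ℝ) = ((k:ℝ)+(N:ℝ))+1 by ring,
        div_sub_div _ _ h1.ne' h2.ne']
      rw [show (1:ℝ)*(((k:ℝ)+(N:ℝ))+1) - ((k:ℝ)+(N:ℝ))*1 = 1 by ring]
    have h4 : 1 / lam (k + N) ≤ 1 / (((k:ℝ)+(N:ℝ)) * (((k  :ℝ)+(N:ℝ))+1)) := by
      have : ((k + N : ℕ):ℝ) + 1 = (k:ℝ) + (N:ℝ) + 1 := by push_cast; ring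
      have h5 := one_div_lam_le (k + N) h1 (by rw [this]; linarith)
      rw [this] at h5
      exact h5
    simp only []
    push_cast
    linarith [h4, h3]
  calc ∑ k ∈ Finset.range K, min δ (1 / lam (k + N))
      ≤ ∑ k ∈ Finset.range K,
          ((fun j : ℕ => 1/((j:ℝ)+(N:ℝ))) k - (fun j : ℕ => 1/((j:ℝ)+(N:ℝ))) (k+1)) :=
        Finset.sum_le_sum (fun k _ => hterm k)
    _ = 1/(0+(N:ℝ)) - 1/((K:ℝ)+(N:ℝ)) := by
        rw [Finset.sum_range_sub' (fun j : ℕ => 1/((j:ℝ)+(N:ℝ))) K]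
        norm_num
    _ ≤ 1 / (N:ℝ) := by
        have h1 : (0:ℝ) < (K:ℝ) + (N:ℝ) := by linarith [Nat.cast_nonneg (α := ℝ) K]
        have : 0 ≤ 1/((K:ℝ)+(N:ℝ)) := by positivity
        simp only [zero_add]
        linarith

lemma series_bound {δ : ℝ} (hδ : 0 < δ) :
    (∑' n : ℕ, min δ (1 / lam n)) ≤ 3 * Real.sqrt δ := by
  set S := ∑' n : ℕ, min δ (1 / lam n) with hS
  have hsum := summable_min hδ.le
  by_cases hδ1 : 1 ≤ δ
  · -- large δ : use N = 1
    have h1 : 1 ≤ Real.sqrt δ := by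
      rw [show (1:ℝ) = Real.sqrt 1 by simp]
      exact Real.sqrt_le_sqrt hδ1
    have hsplit := Summable.sum_add_tsum_nat_add (f := fun n : ℕ => min δ (1 / lam n)) 1 hsum
    have hhead : ∑ i ∈ Finset.range 1, min δ (1 / lam i) ≤ 1 := by
      rw [Finset.sum_range_one]
      refine (min_le_right _ _).trans ?_
      rw [div_le_one (lam_pos 0)]
      exact one_le_lam 0
    have htail : (∑' k : ℕ, min δ (1 / lam (k + 1))) ≤ 1 := by
      have := tail_bound hδ.le (le_refl 1)
      simpa using this
    have : S ≤ 2 := by rw [hS, ← hsplit]; push_cast at htail ⊢; linarith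
    linarith
  · push_neg at hδ1
    have hsq : 0 < Real.sqrt δ := Real.sqrt_pos.mpr hδ
    set N : ℕ := ⌈1 / Real.sqrt δ⌉₊ with hN
    have hN1 : 1 ≤ N := Nat.one_le_ceil_iff.mpr (by positivity)
    have hNl : (1:ℝ) / Real.sqrt δ ≤ (N:ℝ) := Nat.le_ceil _
    have hNu : (N:ℝ) < 1 / Real.sqrt δ + 1 := Nat.ceil_lt_add_one (by positivity)
    have hsplit := Summable.sum_add_tsum_nat_add (f := fun n : ℕ => min δ (1 / lam n)) N hsum
    have hhead : ∑ i ∈ Finset.range N, min δ (1 / lam i) ≤ (N:ℝ) * δ := by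
      calc ∑ i ∈ Finset.range N, min δ (1 / lam i) ≤ ∑ _i ∈ Finset.range N, δ :=
            Finset.sum_le_sum (fun i _ => min_le_left _ _)
        _ = (N:ℝ) * δ := by rw [Finset.sum_const, Finset.card_range, nsmul_eq_mul]
    have hNδ : (N:ℝ) * δ ≤ 2 * Real.sqrt δ := by
      have h1 : (N:ℝ) * δ ≤ (1 / Real.sqrt δ + 1) * δ := by nlinarith
      have h2 : (1 / Real.sqrt δ) * δ = Real.sqrt δ := by
        rw [div_mul_eq_mul_div, one_mul]
        exact Real.div_sqrt
      have h3 : δ ≤ Real.sqrt δ := by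
        nlinarith [Real.sq_sqrt hδ.le, Real.sqrt_nonneg δ]
      nlinarith
    have htail : (∑' k : ℕ, min δ (1 / lam (k + N))) ≤ Real.sqrt δ := by
      refine (tail_bound hδ.le hN1).trans ?_
      rw [div_le_iff₀ (by positivity : (0:ℝ) < (N:ℝ))]
      have h0 : (1 / Real.sqrt δ) * Real.sqrt δ = 1 := by field_simp
      nlinarith [mul_le_mul_of_nonneg_right hNl hsq.le]
    have : S ≤ (N:ℝ) * δ + Real.sqrt δ := by rw [hS, ← hsplit]; linarith
    linarith

theorem stmt_3 :
    ∃ C > 0, ∀ s t : ℝ, 0 ≤ s → s < t → ∀ x ∈ Set.Icc (0:ℝ) 1,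
      ∫ r in (0:ℝ)..s, ∫ ξ in (0:ℝ)..1,
          (NeumannHeatKernel (t - r) x ξ - NeumannHeatKernel (s - r) x ξ) ^ 2 ≤
        C * |t - s| ^ ((1:ℝ)/2) := by
  refine ⟨6, by norm_num, ?_⟩
  intro s t hs hst x _
  have hδ : 0 < t - s := sub_pos.2 hst
  have hrhs : (6:ℝ) * |t - s| ^ ((1:ℝ)/2) = 6 * Real.sqrt (t - s) := by
    rw [abs_of_pos hδ, Real.sqrt_eq_rpow]
  set F : ℝ → ℝ := fun r => ∫ ξ in (0:ℝ)..1,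
    (NeumannHeatKernel (t - r) x ξ - NeumannHeatKernel (s - r) x ξ) ^ 2 with hF
  rw [intervalIntegral.integral_of_le hs]
  set μ := volume.restrict (Set.Ioc (0:ℝ) s) with hμ
  by_cases hInt : Integrable F μ
  case neg =>
    rw [show (∫ r in Set.Ioc (0:ℝ) s, F r) = ∫ r, F r ∂μ from rfl, integral_undef hInt, hrhs]
    positivity
  case pos =>
  have hFnonneg : ∀ r, 0 ≤ F r := fun r =>
    intervalIntegral.integral_nonneg zero_le_one (fun u _ => sq_nonneg _)
  set g : ℕ → ℝ → ℝ := fun n r =>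
    2 * Real.exp (-(lam n * (s - r))) * (min 1 (lam n * (t - s))) ^ 2 with hg
  have hgcont : ∀ n, Continuous (g n) := by intro n; fun_prop
  have hgnonneg : ∀ n r, 0 ≤ g n r := by
    intro n r
    have := Real.exp_pos (-(lam n * (s - r)))
    positivity
  have hmin0 : ∀ n : ℕ, 0 ≤ min 1 (lam n * (t - s)) := fun n =>
    le_min zero_le_one (mul_nonneg (lam_pos n).le hδ.le)
  have hmin1 : ∀ n : ℕ, min 1 (lam n * (t - s)) ≤ 1 := fun n => min_le_left _ _
  -- a.e. pointwise bound
  have hae : ∀ᵐ r ∂μ, ENNReal.ofReal (F r) ≤ ∑' n, ENNReal.ofReal (g n r) := by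
    have h1 : ∀ᵐ r ∂μ, r ∈ Set.Ioc (0:ℝ) s := ae_restrict_mem measurableSet_Ioc
    have h2 : ∀ᵐ r ∂μ, r ≠ s := by
      rw [ae_iff]
      have hsub : {r : ℝ | ¬ r ≠ s} = {s} := by ext r; simp
      rw [hsub]
      exact le_antisymm ((Measure.restrict_le_self _).trans_eq (Real.volume_singleton)) zero_le
    filter_upwards [h1, h2] with r hr hrs
    have hσ : 0 < s - r := sub_pos.2 (lt_of_le_of_ne hr.2 hrs)
    have hστ : s - r < t - r := by linarith
    have hts : t - r - (s - r) = t - s := by ring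
    have hFr : F r ≤ ∑' n, g n r := by
      have := inner_le x hσ hστ
      rw [hts] at this
      exact this
    have hsum_g : Summable (fun n => g n r) := by
      apply summable_of_abs_le_exp hσ (K := 2)
      intro n
      rw [abs_of_nonneg (hgnonneg n r)]
      have hsq : (min 1 (lam n * (t - s))) ^ 2 ≤ 1 := by nlinarith [hmin0 n, hmin1 n]
      simp only [hg]
      nlinarith [Real.exp_pos (-(lam n * (s - r)))]
    calc ENNReal.ofReal (F r) ≤ ENNReal.ofReal (∑' n, g n r) := ENNReal.ofReal_le_ofReal hFr
      _ = ∑' n, ENNReal.ofReal (g n r) :=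
          ENNReal.ofReal_tsum_of_nonneg (fun n => hgnonneg n r) hsum_g
  -- integral of each g n
  have hg_int : ∀ n : ℕ, Integrable (g n) μ := fun n => (hgcont n).integrableOn_Ioc
  have hg_val : ∀ n : ℕ, (∫ r, g n r ∂μ) ≤ 2 * min (t - s) (1 / lam n) := by
    intro n
    have hl := lam_pos n
    set m := min 1 (lam n * (t - s)) with hm
    have heq : (∫ r, g n r ∂μ) = (2 * m ^ 2) * ((1 - Real.exp (-(lam n * s))) / lam n) := by
      rw [hμ, ← intervalIntegral.integral_of_le hs]
      have hshape : ∀ r : ℝ, g n r = (2 * m ^ 2) * Real.exp (-(lam n * (s - r))) := by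
        intro r; rw [hg]; ring
      rw [intervalIntegral.integral_congr (fun r _ => hshape r),
        intervalIntegral.integral_const_mul, integral_exp_sub s hl]
    rw [heq]
    have hexp0 : 0 < Real.exp (-(lam n * s)) := Real.exp_pos _
    have hexp1 : Real.exp (-(lam n * s)) ≤ 1 := by
      rw [Real.exp_le_one_iff]
      simp only [neg_nonpos]
      exact mul_nonneg hl.le hs
    have hb : m ^ 2 / lam n ≤ min (t - s) (1 / lam n) := by
      refine le_min ?_ ?_
      · rw [div_le_iff₀ hl]
        have h1 : m ^ 2 ≤ m := by nlinarith [hmin0 n, hmin1 n]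
        have h2 : m ≤ lam n * (t - s) := min_le_right _ _
        nlinarith
      · have hm2 : m ^ 2 ≤ 1 := by nlinarith [hmin0 n, hmin1 n]
        exact (div_le_div_iff_of_pos_right hl).mpr hm2
    have h3 : (2 * m ^ 2) * ((1 - Real.exp (-(lam n * s))) / lam n) ≤ 2 * (m ^ 2 / lam n) := by
      have hee : (1 - Real.exp (-(lam n * s))) / lam n ≤ 1 / lam n :=
        (div_le_div_iff_of_pos_right hl).mpr (by linarith)
      calc (2 * m ^ 2) * ((1 - Real.exp (-(lam n * s))) / lam n)
          ≤ (2 * m ^ 2) * (1 / lam n) :=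
            mul_le_mul_of_nonneg_left hee (by nlinarith [hmin0 n])
        _ = 2 * (m ^ 2 / lam n) := by ring
    refine h3.trans ?_
    linarith [hb]
  have hmin_sum : Summable (fun n : ℕ => min (t - s) (1 / lam n)) := summable_min hδ.le
  have hchain : (∫⁻ r, ENNReal.ofReal (F r) ∂μ) ≤ ENNReal.ofReal (6 * Real.sqrt (t - s)) := by
    calc ∫⁻ r, ENNReal.ofReal (F r) ∂μ
        ≤ ∫⁻ r, ∑' n, ENNReal.ofReal (g n r) ∂μ := lintegral_mono_ae hae
      _ = ∑' n, ∫⁻ r, ENNReal.ofReal (g n r) ∂μ :=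
          lintegral_tsum (fun n => ((hgcont n).measurable.ennreal_ofReal).aemeasurable)
      _ = ∑' n, ENNReal.ofReal (∫ r, g n r ∂μ) := by
          congr 1
          funext n
          exact (ofReal_integral_eq_lintegral_ofReal (hg_int n)
            (Filter.Eventually.of_forall (fun r => hgnonneg n r))).symm
      _ ≤ ∑' n, ENNReal.ofReal (2 * min (t - s) (1 / lam n)) :=
          ENNReal.tsum_le_tsum (fun n => ENNReal.ofReal_le_ofReal (hg_val n))
      _ = ENNReal.ofReal (∑' n, 2 * min (t - s) (1 / lam n)) := by
          refine (ENNReal.ofReal_tsum_of_nonneg (fun n => ?_) (hmin_sum.mul_left 2)).symm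
          have : (0:ℝ) ≤ min (t - s) (1 / lam n) :=
            le_min hδ.le (one_div_nonneg.mpr (lam_pos n).le)
          linarith
      _ ≤ ENNReal.ofReal (6 * Real.sqrt (t - s)) := by
          apply ENNReal.ofReal_le_ofReal
          rw [tsum_mul_left]
          have := series_bound hδ
          linarith
  calc (∫ r, F r ∂μ) = (∫⁻ r, ENNReal.ofReal (F r) ∂μ).toReal :=
        integral_eq_lintegral_of_nonneg_ae (Filter.Eventually.of_forall hFnonneg)
          hInt.aestronglyMeasurable
    _ ≤ (ENNReal.ofReal (6 * Real.sqrt (t - s))).toReal :=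
        ENNReal.toReal_mono ENNReal.ofReal_ne_top hchain
    _ = 6 * Real.sqrt (t - s) := ENNReal.toReal_ofReal (by positivity)
    _ = 6 * |t - s| ^ ((1:ℝ)/2) := hrhs.symm
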